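/- Let (t_n)_{n≥1} be a strictly decreasing sequence of positive reals with t_n → 0. Then the Minkowski dimension of the set {t_n : n ≥ 1} equals the infimum of all a > 0 such that ∑_{n=1}^∞ (t_n − t_{n+1})^a < ∞. -/

import Mathlib

open MeasureTheory

/-- The `δ`-entropy number `N(E,δ) = #{k ∈ ℕ : E ∩ [kδ,(k+1)δ] ≠ ∅}`. -/
noncomputable def entropyNum (E : Set ℝ) (δ : ℝ) : ℕ :=
  Set.ncard {k : ℕ | (E ∩ Set.Icc (k * δ) ((k + 1) * δ)).Nonempty}

/-- The (upper) Minkowski dimension of a bounded set `E ⊆ ℝ`. -/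
noncomputable def minkowskiDim (E : Set ℝ) : ℝ :=
  sInf {a : ℝ | 0 < a ∧ ∃ C : ℝ, 0 < C ∧
    ∀ δ ∈ Set.Ioc (0 : ℝ) 1, (entropyNum E δ : ℝ) ≤ C * δ ^ (-a)}

section Aux

open ENNReal

variable {t : ℕ → ℝ}

lemma summable_gap (hpos : ∀ n, 0 < t n) (hanti : StrictAnti t) :
    Summable (fun n => t n - t (n + 1)) := by
  apply summable_of_sum_range_le (c := t 0)
  · intro n; have := hanti (Nat.lt_succ_self n); linarith
  · intro n
    rw [Finset.sum_range_sub' t n]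
    have := hpos n; linarith

lemma min_le_rpow {d δ a : ℝ} (hd : 0 < d) (hδ : 0 < δ) (ha : 0 < a) (ha1 : a ≤ 1) :
    min d δ ≤ δ ^ (1 - a) * d ^ a := by
  rcases le_total d δ with h | h
  · rw [min_eq_left h]
    have h1 : d = d ^ (1 - a) * d ^ a := by
      rw [← Real.rpow_add hd]; norm_num
    calc d = d ^ (1 - a) * d ^ a := h1
      _ ≤ δ ^ (1 - a) * d ^ a := mul_le_mul_of_nonneg_right
          (Real.rpow_le_rpow hd.le h (by linarith)) (Real.rpow_nonneg hd.le _)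
  · rw [min_eq_right h]
    have h1 : δ = δ ^ (1 - a) * δ ^ a := by
      rw [← Real.rpow_add hδ]; norm_num
    calc δ = δ ^ (1 - a) * δ ^ a := h1
      _ ≤ δ ^ (1 - a) * d ^ a := mul_le_mul_of_nonneg_left
          (Real.rpow_le_rpow hδ.le h ha.le) (Real.rpow_nonneg hδ.le _)

lemma hitSet_finite (hanti : StrictAnti t) {δ : ℝ} (hδ : 0 < δ) :
    {k : ℕ | (Set.range t ∩ Set.Icc (k * δ) ((k + 1) * δ)).Nonempty}.Finite := by
  apply Set.Finite.subset (Set.finite_Iic ⌊t 0 / δ⌋₊)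
  rintro k ⟨x, ⟨m, rfl⟩, hx1, hx2⟩
  have htm : t m ≤ t 0 := hanti.antitone (Nat.zero_le m)
  have : (k : ℝ) ≤ t 0 / δ := by
    rw [le_div_iff₀ hδ]; linarith
  exact Set.mem_Iic.2 (Nat.le_floor this)

lemma cover_lemma (hpos : ∀ n, 0 < t n) (hanti : StrictAnti t)
    (hlim : Filter.Tendsto t Filter.atTop (nhds 0)) {δ : ℝ} (hδ : 0 < δ) :
    (⋃ m, Set.Icc (t m - δ) (t m + δ)) ⊆
      Set.Icc (-δ) δ ∪ Set.Icc (t 0) (t 0 + δ) ∪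
        ⋃ n, (Set.Icc (t n - min (t n - t (n + 1)) δ) (t n) ∪
          Set.Icc (t (n + 1)) (t (n + 1) + min (t n - t (n + 1)) δ)) := by
  rintro x hx
  simp only [Set.mem_iUnion, Set.mem_Icc] at hx
  obtain ⟨m, hm1, hm2⟩ := hx
  rcases le_or_gt x δ with hxδ | hxδ
  · left; left
    exact ⟨by have := hpos m; linarith, hxδ⟩
  rcases lt_or_ge (t 0) x with hx0 | hx0
  · left; right
    have : t m ≤ t 0 := hanti.antitone (Nat.zero_le m)
    exact ⟨le_of_lt hx0, by linarith⟩
  have hex : ∃ n, t n < x := by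
    have := hlim.eventually_lt_const (by linarith : (0:ℝ) < x)
    exact this.exists
  classical
  have hfind : t (Nat.find hex) < x := Nat.find_spec hex
  have hn0pos : Nat.find hex ≠ 0 := by
    intro h
    rw [h] at hfind; linarith
  obtain ⟨n, hn⟩ := Nat.exists_eq_succ_of_ne_zero hn0pos
  have hfind' : t (n + 1) < x := by rw [← Nat.succ_eq_add_one, ← hn]; exact hfind
  have hxn : x ≤ t n := by
    by_contra h
    have := Nat.find_min' hex (show t n < x by push_neg at h; exact h)
    omega
  right
  refine Set.mem_iUnion.2 ⟨n, ?_⟩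
  rcases le_or_gt m n with hmn | hmn
  · left
    have : t n ≤ t m := hanti.antitone hmn
    constructor
    · have h1 : t n - x ≤ δ := by linarith
      have h2 : t n - x ≤ t n - t (n + 1) := by linarith
      have := le_min h2 h1
      linarith
    · exact hxn
  · right
    have : t m ≤ t (n + 1) := hanti.antitone hmn
    constructor
    · linarith
    · have h1 : x - t (n + 1) ≤ δ := by linarith
      have h2 : x - t (n + 1) ≤ t n - t (n + 1) := by linarith
      have := le_min h2 h1
      linarith

lemma key_measure (hpos : ∀ n, 0 < t n) (hanti : StrictAnti t)
    (hlim : Filter.Tendsto t Filter.atTop (nhds 0))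
    {δ : ℝ} (hδ : 0 < δ) :
    (entropyNum (Set.range t) δ : ℝ) * δ ≤
      3 * δ + ∑' n, 2 * min (t n - t (n + 1)) δ := by
  classical
  have hd : ∀ n, 0 < t n - t (n + 1) := fun n => by
    have := hanti (Nat.lt_succ_self n); linarith
  have hsm : Summable (fun n => 2 * min (t n - t (n + 1)) δ) :=
    (Summable.of_nonneg_of_le (fun n => le_min (hd n).le hδ.le)
      (fun n => min_le_left _ _) (summable_gap hpos hanti)).mul_left 2
  have hfin := hitSet_finite hanti hδ
  set F := hfin.toFinset with hF
  have hcard : entropyNum (Set.range t) δ = F.card := by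
    rw [entropyNum, Set.ncard_eq_toFinset_card _ hfin]
  have hdisj : (↑F : Set ℕ).PairwiseDisjoint
      (fun k : ℕ => Set.Ico ((k : ℝ) * δ) ((k + 1) * δ)) := by
    intro k _ k' _ hkk
    refine Set.Ico_disjoint_Ico.2 ?_
    rcases lt_or_gt_of_ne hkk with h | h
    · have : ((k : ℝ) + 1) ≤ (k' : ℝ) := by exact_mod_cast h
      have h2 : ((k : ℝ) + 1) * δ ≤ (k' : ℝ) * δ := by nlinarith
      exact le_trans (min_le_left _ _) (le_trans h2 (le_max_right _ _))
    · have : ((k' : ℝ) + 1) ≤ (k : ℝ) := by exact_mod_cast h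
      have h2 : ((k' : ℝ) + 1) * δ ≤ (k : ℝ) * δ := by nlinarith
      exact le_trans (min_le_right _ _) (le_trans h2 (le_max_left _ _))
  have h1 : volume (⋃ k ∈ F, Set.Ico ((k : ℝ) * δ) ((k + 1) * δ))
      = (F.card : ℝ≥0∞) * ENNReal.ofReal δ := by
    rw [measure_biUnion_finset hdisj (fun k _ => measurableSet_Ico)]
    have : ∀ k ∈ F, volume (Set.Ico ((k : ℝ) * δ) ((k + 1) * δ)) = ENNReal.ofReal δ := by
      intro k _
      rw [Real.volume_Ico]
      congr 1; ring
    rw [Finset.sum_congr rfl this, Finset.sum_const, nsmul_eq_mul]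
  have h2 : (⋃ k ∈ F, Set.Ico ((k : ℝ) * δ) ((k + 1) * δ)) ⊆
      ⋃ m, Set.Icc (t m - δ) (t m + δ) := by
    intro x hx
    simp only [Set.mem_iUnion, Set.mem_Ico] at hx
    obtain ⟨k, hk, hx1, hx2⟩ := hx
    have hk' : k ∈ {k : ℕ | (Set.range t ∩ Set.Icc ((k:ℝ) * δ) ((k + 1) * δ)).Nonempty} :=
      (Set.Finite.mem_toFinset hfin).1 hk
    obtain ⟨y, ⟨m, rfl⟩, hy1, hy2⟩ := hk'
    exact Set.mem_iUnion.2 ⟨m, by constructor <;> [linarith; linarith]⟩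
  have h3 : volume (Set.Icc (-δ) δ ∪ Set.Icc (t 0) (t 0 + δ) ∪
        ⋃ n, (Set.Icc (t n - min (t n - t (n + 1)) δ) (t n) ∪
          Set.Icc (t (n + 1)) (t (n + 1) + min (t n - t (n + 1)) δ)))
      ≤ ENNReal.ofReal (2 * δ) + ENNReal.ofReal δ
        + ∑' n, ENNReal.ofReal (2 * min (t n - t (n + 1)) δ) := by
    refine le_trans (measure_union_le _ _) ?_
    refine add_le_add (le_trans (measure_union_le _ _) (add_le_add ?_ ?_)) ?_
    · rw [Real.volume_Icc]
      exact ENNReal.ofReal_le_ofReal (by linarith)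
    · rw [Real.volume_Icc]
      exact ENNReal.ofReal_le_ofReal (by linarith)
    · refine le_trans (measure_iUnion_le _) (ENNReal.tsum_le_tsum fun n => ?_)
      refine le_trans (measure_union_le _ _) ?_
      rw [Real.volume_Icc, Real.volume_Icc]
      rw [← ENNReal.ofReal_add (by simp [le_min (hd n).le hδ.le])
        (by simp [le_min (hd n).le hδ.le])]
      exact ENNReal.ofReal_le_ofReal (by rw [two_mul]; apply add_le_add <;> [linarith; linarith])
  have h4 : (F.card : ℝ≥0∞) * ENNReal.ofReal δ ≤
      ENNReal.ofReal (2 * δ) + ENNReal.ofReal δ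
        + ∑' n, ENNReal.ofReal (2 * min (t n - t (n + 1)) δ) := by
    rw [← h1]
    exact le_trans (measure_mono (le_trans h2 (cover_lemma hpos hanti hlim hδ))) h3
  have hmin0 : ∀ n, 0 ≤ 2 * min (t n - t (n + 1)) δ := fun n => by
    have := le_min (hd n).le hδ.le; linarith
  rw [← ENNReal.ofReal_tsum_of_nonneg hmin0 hsm,
    ← ENNReal.ofReal_add (by linarith) (by positivity),
    ← ENNReal.ofReal_add (by positivity) (tsum_nonneg hmin0)] at h4
  have h5 : ENNReal.ofReal ((F.card : ℝ) * δ) ≤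
      ENNReal.ofReal (2 * δ + δ + ∑' n, 2 * min (t n - t (n + 1)) δ) := by
    rw [ENNReal.ofReal_mul (by positivity), ENNReal.ofReal_natCast]
    exact h4
  have h6 := (ENNReal.ofReal_le_ofReal_iff
    (by have : 0 ≤ ∑' n, 2 * min (t n - t (n + 1)) δ := tsum_nonneg hmin0; linarith)).1 h5
  rw [hcard]
  linarith [h6]

lemma entropy_bound (hpos : ∀ n, 0 < t n) (hanti : StrictAnti t)
    (hlim : Filter.Tendsto t Filter.atTop (nhds 0)) {a : ℝ} (ha : 0 < a) (ha1 : a ≤ 1)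
    (hS : Summable fun n => (t n - t (n + 1)) ^ a) :
    ∃ C : ℝ, 0 < C ∧ ∀ δ ∈ Set.Ioc (0 : ℝ) 1,
      (entropyNum (Set.range t) δ : ℝ) ≤ C * δ ^ (-a) := by
  have hd : ∀ n, 0 < t n - t (n + 1) := fun n => by
    have := hanti (Nat.lt_succ_self n); linarith
  set S := ∑' n, (t n - t (n + 1)) ^ a with hSdef
  have hS0 : 0 ≤ S := tsum_nonneg fun n => Real.rpow_nonneg (hd n).le _
  refine ⟨3 + 2 * S, by linarith, ?_⟩
  rintro δ ⟨hδ, hδ1⟩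
  have hsmin : Summable (fun n => min (t n - t (n + 1)) δ) :=
    Summable.of_nonneg_of_le (fun n => le_min (hd n).le hδ.le)
      (fun n => min_le_left _ _) (summable_gap hpos hanti)
  have key := key_measure hpos hanti hlim hδ
  have hts : ∑' n, 2 * min (t n - t (n + 1)) δ ≤ 2 * (δ ^ (1 - a) * S) := by
    rw [tsum_mul_left]
    refine mul_le_mul_of_nonneg_left ?_ (by norm_num : (0:ℝ) ≤ 2)
    calc ∑' n, min (t n - t (n + 1)) δ
        ≤ ∑' n, δ ^ (1 - a) * (t n - t (n + 1)) ^ a :=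
          hsmin.tsum_le_tsum (fun n => min_le_rpow (hd n) hδ ha ha1) (hS.mul_left _)
      _ = δ ^ (1 - a) * S := tsum_mul_left
  have hrp : δ ^ (1 - a) = δ * δ ^ (-a) := by
    rw [show (1:ℝ) - a = 1 + (-a) by ring, Real.rpow_add hδ, Real.rpow_one]
  have h7 : (entropyNum (Set.range t) δ : ℝ) * δ ≤ (3 + 2 * S * δ ^ (-a)) * δ := by
    have : (3 + 2 * S * δ ^ (-a)) * δ = 3 * δ + 2 * (δ ^ (1 - a) * S) := by
      rw [hrp]; ring
    rw [this]
    linarith [key, hts]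
  have h8 : (entropyNum (Set.range t) δ : ℝ) ≤ 3 + 2 * S * δ ^ (-a) :=
    le_of_mul_le_mul_right h7 hδ
  have h9 : 1 ≤ δ ^ (-a) :=
    Real.one_le_rpow_of_pos_of_le_one_of_nonpos hδ hδ1 (by linarith)
  nlinarith [h8, h9, hS0]

lemma gap_tendsto (hlim : Filter.Tendsto t Filter.atTop (nhds 0)) :
    Filter.Tendsto (fun n => t n - t (n + 1)) Filter.atTop (nhds 0) := by
  have h2 : Filter.Tendsto (fun n => t (n + 1)) Filter.atTop (nhds 0) :=
    hlim.comp (Filter.tendsto_add_atTop_nat 1)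
  simpa using hlim.sub h2

lemma bigGaps_finite (hlim : Filter.Tendsto t Filter.atTop (nhds 0)) {δ : ℝ} (hδ : 0 < δ) :
    {n : ℕ | δ ≤ t n - t (n + 1)}.Finite := by
  have := ((gap_tendsto hlim).eventually_lt_const hδ)
  rw [Filter.eventually_atTop] at this
  obtain ⟨N, hN⟩ := this
  apply Set.Finite.subset (Set.finite_Iio N)
  intro n hn
  simp only [Set.mem_setOf_eq] at hn
  by_contra h
  simp only [Set.mem_Iio, not_lt] at h
  exact absurd hn (not_le.2 (hN n h))

lemma bigGaps_card (hpos : ∀ n, 0 < t n) (hanti : StrictAnti t)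
    {δ : ℝ} (hδ : 0 < δ) :
    {n : ℕ | δ ≤ t n - t (n + 1)}.ncard ≤ entropyNum (Set.range t) δ := by
  rw [entropyNum]
  refine Set.ncard_le_ncard_of_injOn (fun n => ⌊t n / δ⌋₊) ?_ ?_ (hitSet_finite hanti hδ)
  · intro n hn
    refine ⟨t n, ⟨n, rfl⟩, ?_, ?_⟩
    · calc (⌊t n / δ⌋₊ : ℝ) * δ ≤ t n / δ * δ := by
            have := Nat.floor_le (le_of_lt (div_pos (hpos n) hδ))
            nlinarith
        _ = t n := div_mul_cancel₀ _ hδ.ne'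
    · have h1 : t n / δ < ⌊t n / δ⌋₊ + 1 := Nat.lt_floor_add_one _
      calc t n = t n / δ * δ := (div_mul_cancel₀ _ hδ.ne').symm
        _ ≤ ((⌊t n / δ⌋₊ : ℝ) + 1) * δ := by nlinarith
  · intro n hn n' hn' hf
    by_contra hne
    simp only [Set.mem_setOf_eq] at hn hn'
    have key : ∀ m : ℕ, (⌊t m / δ⌋₊ : ℝ) * δ ≤ t m ∧ t m < (⌊t m / δ⌋₊ + 1 : ℝ) * δ := by
      intro m
      constructor
      · have := Nat.floor_le (le_of_lt (div_pos (hpos m) hδ))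
        calc (⌊t m / δ⌋₊ : ℝ) * δ ≤ t m / δ * δ := by nlinarith
          _ = t m := div_mul_cancel₀ _ hδ.ne'
      · have h1 : t m / δ < ⌊t m / δ⌋₊ + 1 := Nat.lt_floor_add_one _
        calc t m = t m / δ * δ := (div_mul_cancel₀ _ hδ.ne').symm
          _ < ((⌊t m / δ⌋₊ : ℝ) + 1) * δ := by nlinarith
    obtain ⟨hn1, hn2⟩ := key n
    obtain ⟨hn1', hn2'⟩ := key n'
    simp only [] at hf
    rw [show ⌊t n / δ⌋₊ = ⌊t n' / δ⌋₊ from hf] at hn1 hn2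
    have hclose : |t n - t n'| < δ := by
      rw [abs_sub_lt_iff]; constructor <;> nlinarith
    rcases lt_or_gt_of_ne hne with h | h
    · have : t n' ≤ t (n + 1) := hanti.antitone h
      have : δ ≤ t n - t n' := by linarith
      rw [abs_sub_lt_iff] at hclose; linarith
    · have : t n ≤ t (n' + 1) := hanti.antitone h
      have : δ ≤ t n' - t n := by linarith
      rw [abs_sub_lt_iff] at hclose; linarith

lemma summable_of_card_bound (hanti : StrictAnti t)
    (hlim : Filter.Tendsto t Filter.atTop (nhds 0)) {a C : ℝ} (ha : 0 < a) (hC : 0 < C)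
    (hM : ∀ δ ∈ Set.Ioc (0:ℝ) 1, ({n : ℕ | δ ≤ t n - t (n + 1)}.ncard : ℝ) ≤ C * δ ^ (-a))
    {b : ℝ} (hb : a < b) :
    Summable fun n => (t n - t (n + 1)) ^ b := by
  classical
  have hd : ∀ n, 0 < t n - t (n + 1) := fun n => by
    have := hanti (Nat.lt_succ_self n); linarith
  have hb0 : 0 < b := lt_trans ha hb
  obtain ⟨N₀, hN₀⟩ := Filter.eventually_atTop.1 ((gap_tendsto hlim).eventually_lt_const one_pos)
  rw [← summable_nat_add_iff N₀]
  set e : ℕ → ℝ := fun n => t (n + N₀) - t (n + N₀ + 1) with he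
  have he0 : ∀ n, 0 < e n := fun n => hd _
  have he1 : ∀ n, e n ≤ 1 := fun n => (hN₀ _ (Nat.le_add_left _ _)).le
  set r : ℝ := (2:ℝ) ^ (a - b) with hr
  have hr0 : 0 ≤ r := Real.rpow_nonneg (by norm_num) _
  have hr1 : r < 1 := Real.rpow_lt_one_of_one_lt_of_neg one_lt_two (by linarith)
  have hgeo : Summable fun j : ℕ => r ^ j := summable_geometric_of_lt_one hr0 hr1
  have hgeo0 : 0 ≤ ∑' j : ℕ, r ^ j := tsum_nonneg fun j => pow_nonneg hr0 j
  apply summable_of_sum_range_le (c := C * 2 ^ a * ∑' j : ℕ, r ^ j)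
  · intro n; exact Real.rpow_nonneg (hd _).le b
  intro m
  set jf : ℕ → ℕ := fun n => ⌊Real.logb 2 (e n)⁻¹⌋₊ with hjf
  have hlogfacts : ∀ n, e n ≤ 2 ^ (-(jf n : ℝ)) ∧ (2:ℝ) ^ (-(jf n : ℝ) - 1) < e n := by
    intro n
    have hinv : 1 ≤ (e n)⁻¹ := (one_le_inv₀ (he0 n)).mpr (he1 n)
    have hlog0 : 0 ≤ Real.logb 2 (e n)⁻¹ := Real.logb_nonneg one_lt_two hinv
    have hlogeq : (2:ℝ) ^ Real.logb 2 (e n)⁻¹ = (e n)⁻¹ :=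
      Real.rpow_logb two_pos (by norm_num) (inv_pos.2 (he0 n))
    have hp : (0:ℝ) < 2 ^ ((jf n : ℝ)) := Real.rpow_pos_of_pos two_pos _
    constructor
    · have h1 : (2:ℝ) ^ ((jf n : ℝ)) ≤ (e n)⁻¹ := by
        rw [← hlogeq]
        exact (Real.rpow_le_rpow_left_iff one_lt_two).2 (Nat.floor_le hlog0)
      have h2 : ((e n)⁻¹)⁻¹ ≤ ((2:ℝ) ^ ((jf n : ℝ)))⁻¹ := by
        apply inv_anti₀ hp h1
      rw [inv_inv] at h2
      rwa [Real.rpow_neg (by norm_num : (0:ℝ) ≤ 2)]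
    · have h1 : (e n)⁻¹ < (2:ℝ) ^ ((jf n : ℝ) + 1) := by
        rw [← hlogeq]
        exact (Real.rpow_lt_rpow_left_iff one_lt_two).2 (Nat.lt_floor_add_one _)
      have h2 : ((2:ℝ) ^ ((jf n : ℝ) + 1))⁻¹ < ((e n)⁻¹)⁻¹ :=
        inv_strictAnti₀ (inv_pos.2 (he0 n)) h1
      rw [inv_inv] at h2
      rwa [show -(jf n : ℝ) - 1 = -((jf n : ℝ) + 1) by ring,
        Real.rpow_neg (by norm_num : (0:ℝ) ≤ 2)]
  have hfib : ∀ j : ℕ, ((((Finset.range m).filter (fun n => jf n = j)).card : ℝ))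
      ≤ C * 2 ^ (a * ((j : ℝ) + 1)) := by
    intro j
    set δj : ℝ := (2:ℝ) ^ (-(j:ℝ) - 1) with hδj
    have hδjpos : 0 < δj := Real.rpow_pos_of_pos two_pos _
    have hδj1 : δj ≤ 1 := Real.rpow_le_one_of_one_le_of_nonpos one_le_two
      (by have := Nat.cast_nonneg (α := ℝ) j; linarith)
    have step1 : ((Finset.range m).filter (fun n => jf n = j)).card ≤
        {n : ℕ | δj ≤ t n - t (n + 1)}.ncard := by
      rw [Set.ncard_eq_toFinset_card _ (bigGaps_finite hlim hδjpos)]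
      apply Finset.card_le_card_of_injOn (fun n => n + N₀)
      · intro n hn
        simp only [Finset.mem_coe, Finset.mem_filter] at hn ⊢
        rw [Set.Finite.mem_toFinset]
        have := (hlogfacts n).2
        rw [hn.2] at this
        exact Set.mem_setOf_eq ▸ this.le
      · exact fun x _ y _ h => add_left_injective N₀ h
    have step2 := hM δj ⟨hδjpos, hδj1⟩
    have step3 : δj ^ (-a) = 2 ^ (a * ((j:ℝ) + 1)) := by
      rw [hδj, ← Real.rpow_mul (by norm_num : (0:ℝ) ≤ 2)]
      congr 1; ring
    calc ((((Finset.range m).filter (fun n => jf n = j)).card : ℝ))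
        ≤ ({n : ℕ | δj ≤ t n - t (n + 1)}.ncard : ℝ) := by exact_mod_cast step1
      _ ≤ C * δj ^ (-a) := step2
      _ = C * 2 ^ (a * ((j:ℝ) + 1)) := by rw [step3]
  have hmaps : ∀ n ∈ Finset.range m, jf n ∈ (Finset.range m).image jf :=
    fun n hn => Finset.mem_image_of_mem jf hn
  rw [← Finset.sum_fiberwise_of_maps_to hmaps (fun n => e n ^ b)]
  have hinner : ∀ j ∈ (Finset.range m).image jf,
      ∑ n ∈ (Finset.range m).filter (fun n => jf n = j), e n ^ b ≤ C * 2 ^ a * r ^ j := by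
    intro j _
    have hterm : ∀ n ∈ (Finset.range m).filter (fun n => jf n = j),
        e n ^ b ≤ (2:ℝ) ^ (-(j:ℝ) * b) := by
      intro n hn
      simp only [Finset.mem_filter] at hn
      have h1 := (hlogfacts n).1
      rw [hn.2] at h1
      calc e n ^ b ≤ ((2:ℝ) ^ (-(j:ℝ))) ^ b :=
            Real.rpow_le_rpow (he0 n).le h1 hb0.le
        _ = (2:ℝ) ^ (-(j:ℝ) * b) := by
            rw [← Real.rpow_mul (by norm_num : (0:ℝ) ≤ 2)]
    calc ∑ n ∈ (Finset.range m).filter (fun n => jf n = j), e n ^ b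
        ≤ (((Finset.range m).filter (fun n => jf n = j)).card : ℝ) * (2:ℝ) ^ (-(j:ℝ) * b) := by
          have := Finset.sum_le_card_nsmul _ _ _ hterm
          rwa [nsmul_eq_mul] at this
      _ ≤ C * 2 ^ (a * ((j:ℝ) + 1)) * (2:ℝ) ^ (-(j:ℝ) * b) := by
          apply mul_le_mul_of_nonneg_right (hfib j) (Real.rpow_nonneg (by norm_num) _)
      _ = C * 2 ^ a * r ^ j := by
          rw [hr, ← Real.rpow_natCast ((2:ℝ) ^ (a - b)) j,
            ← Real.rpow_mul (by norm_num : (0:ℝ) ≤ 2)]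
          rw [mul_assoc, mul_assoc, ← Real.rpow_add two_pos, ← Real.rpow_add two_pos]
          congr 1
          ring
  calc ∑ j ∈ (Finset.range m).image jf, ∑ n ∈ (Finset.range m).filter (fun n => jf n = j), e n ^ b
      ≤ ∑ j ∈ (Finset.range m).image jf, C * 2 ^ a * r ^ j := Finset.sum_le_sum hinner
    _ = C * 2 ^ a * ∑ j ∈ (Finset.range m).image jf, r ^ j := by rw [Finset.mul_sum]
    _ ≤ C * 2 ^ a * ∑' j : ℕ, r ^ j := by
        apply mul_le_mul_of_nonneg_left
          (hgeo.sum_le_tsum _ (fun j _ => pow_nonneg hr0 j))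
          (by positivity)

end Aux

theorem stmt5 (t : ℕ → ℝ) (hpos : ∀ n, 0 < t n) (hanti : StrictAnti t)
    (hlim : Filter.Tendsto t Filter.atTop (nhds 0)) :
    minkowskiDim (Set.range t) =
      sInf {a : ℝ | 0 < a ∧ Summable fun n : ℕ => (t n - t (n + 1)) ^ a} := by
  set L := {a : ℝ | 0 < a ∧ ∃ C : ℝ, 0 < C ∧
    ∀ δ ∈ Set.Ioc (0 : ℝ) 1, (entropyNum (Set.range t) δ : ℝ) ≤ C * δ ^ (-a)} with hL
  set R := {a : ℝ | 0 < a ∧ Summable fun n : ℕ => (t n - t (n + 1)) ^ a} with hR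
  have hsum1 : Summable fun n : ℕ => (t n - t (n + 1)) ^ (1:ℝ) := by
    simp only [Real.rpow_one]
    exact summable_gap hpos hanti
  have hR1 : (1:ℝ) ∈ R := ⟨one_pos, hsum1⟩
  have hRL : R ⊆ L := by
    rintro a ⟨ha, hS⟩
    rcases le_or_gt a 1 with ha1 | ha1
    · exact ⟨ha, entropy_bound hpos hanti hlim ha ha1 hS⟩
    · obtain ⟨C, hC, hbound⟩ := entropy_bound hpos hanti hlim one_pos le_rfl hsum1
      refine ⟨ha, C, hC, fun δ hδ => le_trans (hbound δ hδ) ?_⟩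
      apply mul_le_mul_of_nonneg_left _ hC.le
      exact Real.rpow_le_rpow_of_exponent_ge hδ.1 hδ.2 (by linarith)
  have hL1 : (1:ℝ) ∈ L := hRL hR1
  have hLbdd : BddBelow L := ⟨0, fun x hx => hx.1.le⟩
  have hRbdd : BddBelow R := ⟨0, fun x hx => hx.1.le⟩
  have le1 : sInf L ≤ sInf R := csInf_le_csInf hLbdd ⟨1, hR1⟩ hRL
  have le2 : sInf R ≤ sInf L := by
    apply le_csInf ⟨1, hL1⟩
    rintro aa ⟨haa, C, hC, hbound⟩
    apply le_of_forall_gt_imp_ge_of_dense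
    intro b hbb
    apply csInf_le hRbdd
    refine ⟨lt_trans haa hbb, ?_⟩
    apply summable_of_card_bound hanti hlim haa hC ?_ hbb
    intro δ hδ
    calc ({n : ℕ | δ ≤ t n - t (n + 1)}.ncard : ℝ)
        ≤ (entropyNum (Set.range t) δ : ℝ) := by
          exact_mod_cast bigGaps_card hpos hanti hδ.1
      _ ≤ C * δ ^ (-aa) := hbound δ hδ
  rw [minkowskiDim]
  exact le_antisymm le1 le2
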